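/- Let L be a Lie algebra over a field k, J a Lie ideal of L, f ∈ L, and g : J → k a linear map such that g((ad f)^j (u)) = 0 for every u ∈ J and every j ≥ 1 (note (ad f)^j (u) ∈ J since J is an ideal). Let M be a Lie module over L and w ∈ M a vector with u · w = g(u) • w for every u ∈ J. Then for every n ∈ ℕ and every u ∈ J: u · (fⁿ · w) = g(u) • (fⁿ · w), where fⁿ · denotes the n-fold iterated action of f on M. -/

import Mathlib

/-- Lie ideals are stable under iterated adjoint action. -/
theorem lieIdeal_adPow_mem
    (k : Type*) [Field k]
    (L : Type*) [LieRing L] [LieAlgebra k L]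
    (J : LieIdeal k L) (f : L) {u : L} (hu : u ∈ J) (j : ℕ) :
    ((LieAlgebra.ad k L f) ^ j) u ∈ J := by
  induction j with
  | zero => simpa using hu
  | succ i ih =>
    rw [pow_succ', Module.End.mul_apply, LieAlgebra.ad_apply]
    exact J.lie_mem ih

/-- If `g : J → k` kills `(ad f)^j u` for all `j ≥ 1` and `u ∈ J`, and `w`
is a common `J`-eigenvector with eigenvalue function `g`, then so is each iterate `fⁿ · w`. -/
theorem iterated_action_is_eigenvector
    (k : Type*) [Field k]
    (L : Type*) [LieRing L] [LieAlgebra k L]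
    (J : LieIdeal k L) (f : L) (g : J →ₗ[k] k)
    (hg : ∀ (u : L) (hu : u ∈ J) (j : ℕ), 1 ≤ j →
      g ⟨((LieAlgebra.ad k L f) ^ j) u, lieIdeal_adPow_mem k L J f hu j⟩ = 0)
    (M : Type*) [AddCommGroup M] [Module k M] [LieRingModule L M] [LieModule k L M]
    (w : M) (hw : ∀ u : J, ⁅(u : L), w⁆ = g u • w) :
    ∀ (n : ℕ) (u : J),
      ⁅(u : L), (fun v : M => ⁅f, v⁆)^[n] w⁆ = g u • (fun v : M => ⁅f, v⁆)^[n] w := by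
  intro n
  induction n with
  | zero => simpa using hw
  | succ n ih =>
    intro u
    rw [Function.iterate_succ_apply']
    set x := (fun v : M => ⁅f, v⁆)^[n] w with hx
    have hfu : ⁅f, (u : L)⁆ ∈ J := J.lie_mem u.2
    have h1 : g ⟨⁅f, (u : L)⁆, hfu⟩ = 0 := by
      have := hg u u.2 1 le_rfl
      simpa using this
    have key : ⁅⁅(u : L), f⁆, x⁆ = 0 := by
      have huf : ⁅(u : L), f⁆ ∈ J := by
        rw [show ⁅(u : L), f⁆ = -⁅f, (u : L)⁆ from (lie_skew _ _).symm]
        exact J.neg_mem hfu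
      have := ih ⟨⁅(u : L), f⁆, huf⟩
      simp only at this
      rw [this]
      have : g ⟨⁅(u : L), f⁆, huf⟩ = 0 := by
        have : (⟨⁅(u : L), f⁆, huf⟩ : J) = -⟨⁅f, (u : L)⁆, hfu⟩ := by
          apply Subtype.ext; exact (lie_skew _ _).symm
        rw [this, map_neg, h1, neg_zero]
      rw [this, zero_smul]
    calc ⁅(u : L), ⁅f, x⁆⁆ = ⁅⁅(u : L), f⁆, x⁆ + ⁅f, ⁅(u : L), x⁆⁆ := leibniz_lie _ _ _
      _ = ⁅f, g u • x⁆ := by rw [key, zero_add, ih u]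
      _ = g u • ⁅f, x⁆ := lie_smul _ _ _
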